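/- Let N, k ≥ 1 be integers, let (x_i^{(r)})_{1≤i≤N, 1≤r≤k} be real numbers, and for each 1 ≤ r ≤ k let f^{(r)} : [0,N] → ℝ be a continuous function with f^{(r)}(0) = 0. Set S_m^{(r)} = Σ_{i=1}^m x_i^{(r)} with S_{−1}^{(r)} = S_0^{(r)} = 0, let U(N,k) = { u = (u_0,…,u_k) ∈ ℝ₊^{k+1} : 0 = u_0 ≤ u_1 ≤ … ≤ u_k = N }, G = sup_{u ∈ U(N,k)} Σ_{r=1}^k ( S_{⌊u_r⌋}^{(r)} − S_{⌊u_{r−1}⌋−1}^{(r)} ), and L = sup_{u ∈ U(N,k)} Σ_{r=1}^k ( f^{(r)}(u_r) − f^{(r)}(u_{r−1}) ). Then |G − L| ≤ 2·Σ_{r=1}^k max_{1≤i≤N} |S_i^{(r)} − f^{(r)}(i)| + 2·Σ_{r=1}^k sup{ |f^{(r)}(s) − f^{(r)}(t)| : 0 ≤ s,t ≤ N, |s−t| < 2 }. -/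
import Mathlib


open MeasureTheory Set

noncomputable section

/-- The partial sums `S_m^{(r)} = Σ_{i=1}^m x_i^{(r)}`, indexed by `m : ℤ`, with the
convention `S_{−1}^{(r)} = S_0^{(r)} = 0` (the sum is empty for `m ≤ 0`). -/
def partialSumZ (x : ℕ → ℕ → ℝ) (r : ℕ) (m : ℤ) : ℝ :=
  ∑ i ∈ Finset.Icc 1 m.toNat, x i r

/-- `u ∈ U(N,k)`, i.e. `u = (u_0, …, u_k) ∈ ℝ₊^{k+1}` with
`0 = u_0 ≤ u_1 ≤ … ≤ u_k = N`. -/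
def memU (N k : ℕ) (u : ℕ → ℝ) : Prop :=
  u 0 = 0 ∧ u k = (N : ℝ) ∧ (∀ i, i < k → u i ≤ u (i + 1)) ∧ ∀ i, i ≤ k → 0 ≤ u i

lemma partialSumZ_nonpos (x : ℕ → ℕ → ℝ) (r : ℕ) {m : ℤ} (hm : m ≤ 0) :
    partialSumZ x r m = 0 := by
  have h : m.toNat = 0 := by omega
  simp [partialSumZ, h]

lemma memU_mono {N k : ℕ} {u : ℕ → ℝ} (h : memU N k u) :
    ∀ i j, i ≤ j → j ≤ k → u i ≤ u j := by
  intro i j hij hjk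
  induction j with
  | zero =>
    have : i = 0 := Nat.le_zero.mp hij
    simp [this]
  | succ n ih =>
    rcases eq_or_lt_of_le hij with h1 | h1
    · exact le_of_eq (by rw [h1])
    · exact le_trans (ih (Nat.lt_succ_iff.mp h1) (le_trans n.le_succ hjk))
        (h.2.2.1 n hjk)

lemma keyBound (N : ℕ) (x : ℕ → ℕ → ℝ) (r : ℕ) (f : ℝ → ℝ) (hf0 : f 0 = 0)
    (e ω : ℝ) (he0 : 0 ≤ e)
    (he : ∀ i : ℕ, 1 ≤ i → i ≤ N → |partialSumZ x r (i : ℤ) - f (i : ℝ)| ≤ e)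
    (hω : ∀ s t : ℝ, s ∈ Set.Icc (0:ℝ) (N : ℝ) → t ∈ Set.Icc (0:ℝ) (N : ℝ) →
      |s - t| < 2 → |f s - f t| ≤ ω)
    {u : ℝ} (hu : u ∈ Set.Icc (0:ℝ) (N : ℝ)) {m : ℤ} (hmN : m ≤ (N : ℤ))
    (hmu : (m : ℝ) ≤ u) (hclose : u - (m : ℝ) < 2) :
    |partialSumZ x r m - f u| ≤ e + ω := by
  rcases le_or_gt m 0 with hm | hm
  · rw [partialSumZ_nonpos x r hm]
    have hm' : (m : ℝ) ≤ 0 := by exact_mod_cast hm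
    have h1 : |f 0 - f u| ≤ ω := by
      apply hω 0 u ⟨le_refl _, by positivity⟩ hu
      rw [abs_sub_comm, abs_of_nonneg (by linarith [hu.1] : (0:ℝ) ≤ u - 0)]
      linarith
    calc |0 - f u| = |f 0 - f u| := by rw [hf0]
      _ ≤ ω := h1
      _ ≤ e + ω := by linarith
  · have hm1 : 1 ≤ m.toNat := by omega
    have hmN' : m.toNat ≤ N := by omega
    have hms : ((m.toNat : ℕ) : ℤ) = m := by omega
    have hcast : ((m.toNat : ℕ) : ℝ) = (m : ℝ) := by exact_mod_cast congrArg Int.cast hms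
    have h1 : |partialSumZ x r m - f (m : ℝ)| ≤ e := by
      have := he m.toNat hm1 hmN'
      rwa [hms, hcast] at this
    have h2 : |f (m : ℝ) - f u| ≤ ω := by
      apply hω _ _ ⟨by exact_mod_cast hm.le, by exact_mod_cast hmN⟩ hu
      rw [abs_sub_comm, abs_of_nonneg (sub_nonneg.mpr hmu)]
      exact hclose
    calc |partialSumZ x r m - f u|
        ≤ |partialSumZ x r m - f (m : ℝ)| + |f (m : ℝ) - f u| := abs_sub_le _ _ _
      _ ≤ e + ω := add_le_add h1 h2

/-- **Deterministic comparison bound.** For real numbers `x_i^{(r)}` and continuous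
functions `f^{(r)} : [0,N] → ℝ` vanishing at `0`, the discrete last-passage functional
`G = sup_{u ∈ U(N,k)} Σ_{r=1}^k (S_{⌊u_r⌋}^{(r)} − S_{⌊u_{r−1}⌋−1}^{(r)})` and the
continuous one `L = sup_{u ∈ U(N,k)} Σ_{r=1}^k (f^{(r)}(u_r) − f^{(r)}(u_{r−1}))` satisfy
`|G − L| ≤ 2 Σ_r max_{1≤i≤N} |S_i^{(r)} − f^{(r)}(i)|
  + 2 Σ_r sup{|f^{(r)}(s) − f^{(r)}(t)| : 0 ≤ s,t ≤ N, |s−t| < 2}`. -/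
theorem discrete_continuous_comparison (N k : ℕ) (hN : 1 ≤ N) (hk : 1 ≤ k)
    (x : ℕ → ℕ → ℝ) (f : ℕ → ℝ → ℝ)
    (hfc : ∀ r, ContinuousOn (f r) (Set.Icc 0 (N : ℝ)))
    (hf0 : ∀ r, f r 0 = 0) :
    |sSup {v | ∃ u : ℕ → ℝ, memU N k u ∧ v = ∑ r ∈ Finset.Icc 1 k,
          (partialSumZ x r ⌊u r⌋ - partialSumZ x r (⌊u (r - 1)⌋ - 1))} -
      sSup {v | ∃ u : ℕ → ℝ, memU N k u ∧ v = ∑ r ∈ Finset.Icc 1 k,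
          (f r (u r) - f r (u (r - 1)))}| ≤
      2 * ∑ r ∈ Finset.Icc 1 k, (Finset.Icc 1 N).sup' (Finset.nonempty_Icc.mpr hN)
            (fun i => |partialSumZ x r (i : ℤ) - f r (i : ℝ)|) +
      2 * ∑ r ∈ Finset.Icc 1 k, sSup {v | ∃ s t : ℝ, s ∈ Set.Icc (0 : ℝ) (N : ℝ) ∧
            t ∈ Set.Icc (0 : ℝ) (N : ℝ) ∧ |s - t| < 2 ∧ v = |f r s - f r t|} := by
  -- notation
  set e : ℕ → ℝ := fun r => (Finset.Icc 1 N).sup' (Finset.nonempty_Icc.mpr hN)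
      (fun i => |partialSumZ x r (i : ℤ) - f r (i : ℝ)|) with he_def
  set ω : ℕ → ℝ := fun r => sSup {v | ∃ s t : ℝ, s ∈ Set.Icc (0 : ℝ) (N : ℝ) ∧
      t ∈ Set.Icc (0 : ℝ) (N : ℝ) ∧ |s - t| < 2 ∧ v = |f r s - f r t|} with hω_def
  set A : Set ℝ := {v | ∃ u : ℕ → ℝ, memU N k u ∧ v = ∑ r ∈ Finset.Icc 1 k,
      (partialSumZ x r ⌊u r⌋ - partialSumZ x r (⌊u (r - 1)⌋ - 1))} with hA_def
  set B : Set ℝ := {v | ∃ u : ℕ → ℝ, memU N k u ∧ v = ∑ r ∈ Finset.Icc 1 k,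
      (f r (u r) - f r (u (r - 1)))} with hB_def
  -- bound on f
  choose M hM using fun r => (isCompact_Icc (a := (0:ℝ)) (b := (N:ℝ))).exists_bound_of_continuousOn (hfc r)
  simp only [Real.norm_eq_abs] at hM
  -- ω properties
  have hωbdd : ∀ r, BddAbove {v | ∃ s t : ℝ, s ∈ Set.Icc (0 : ℝ) (N : ℝ) ∧
      t ∈ Set.Icc (0 : ℝ) (N : ℝ) ∧ |s - t| < 2 ∧ v = |f r s - f r t|} := by
    intro r
    refine ⟨2 * M r, ?_⟩
    rintro v ⟨s, t, hs, ht, -, rfl⟩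
    have h1 := hM r s hs
    have h2 := hM r t ht
    have := abs_sub_abs_le_abs_sub (f r s) (f r t)
    calc |f r s - f r t| ≤ |f r s| + |f r t| := abs_sub _ _
      _ ≤ 2 * M r := by linarith
  have hωle : ∀ r, ∀ s t : ℝ, s ∈ Set.Icc (0:ℝ) (N:ℝ) → t ∈ Set.Icc (0:ℝ) (N:ℝ) →
      |s - t| < 2 → |f r s - f r t| ≤ ω r := by
    intro r s t hs ht hst
    exact le_csSup (hωbdd r) ⟨s, t, hs, ht, hst, rfl⟩
  have hN0 : (0:ℝ) ≤ (N:ℝ) := by positivity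
  have hω0 : ∀ r, 0 ≤ ω r := by
    intro r
    have : (0:ℝ) ∈ {v | ∃ s t : ℝ, s ∈ Set.Icc (0 : ℝ) (N : ℝ) ∧
        t ∈ Set.Icc (0 : ℝ) (N : ℝ) ∧ |s - t| < 2 ∧ v = |f r s - f r t|} :=
      ⟨0, 0, ⟨le_refl _, hN0⟩, ⟨le_refl _, hN0⟩, by norm_num, by simp⟩
    exact le_csSup (hωbdd r) this
  -- e properties
  have heBound : ∀ r, ∀ i : ℕ, 1 ≤ i → i ≤ N →
      |partialSumZ x r (i : ℤ) - f r (i : ℝ)| ≤ e r := by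
    intro r i h1 h2
    exact Finset.le_sup' (fun i : ℕ => |partialSumZ x r (i : ℤ) - f r (i : ℝ)|)
      (Finset.mem_Icc.mpr ⟨h1, h2⟩)
  have he0 : ∀ r, 0 ≤ e r :=
    fun r => le_trans (abs_nonneg _) (heBound r 1 le_rfl hN)
  -- the comparison for each path u
  have hle : ∀ u : ℕ → ℝ, memU N k u → ∀ j, j ≤ k → u j ∈ Set.Icc (0:ℝ) (N:ℝ) := by
    intro u hu j hj
    refine ⟨hu.2.2.2 j hj, ?_⟩
    have := memU_mono hu j k hj le_rfl
    rwa [hu.2.1] at this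
  have hterm : ∀ u : ℕ → ℝ, memU N k u → ∀ r ∈ Finset.Icc 1 k,
      |(partialSumZ x r ⌊u r⌋ - partialSumZ x r (⌊u (r - 1)⌋ - 1)) -
        (f r (u r) - f r (u (r - 1)))| ≤ 2 * e r + 2 * ω r := by
    intro u hu r hr
    rw [Finset.mem_Icc] at hr
    have hr1 : r - 1 ≤ k := by omega
    have hur := hle u hu r hr.2
    have hur1 := hle u hu (r - 1) hr1
    have k1 : |partialSumZ x r ⌊u r⌋ - f r (u r)| ≤ e r + ω r := by
      refine keyBound N x r (f r) (hf0 r) (e r) (ω r) (he0 r) (heBound r) (hωle r) hur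
        ?_ (Int.floor_le _) ?_
      · have : ⌊u r⌋ ≤ ⌊(N:ℝ)⌋ := Int.floor_mono hur.2
        simpa using this
      · have := Int.sub_one_lt_floor (u r)
        linarith
    have k2 : |partialSumZ x r (⌊u (r - 1)⌋ - 1) - f r (u (r - 1))| ≤ e r + ω r := by
      refine keyBound N x r (f r) (hf0 r) (e r) (ω r) (he0 r) (heBound r) (hωle r) hur1
        ?_ ?_ ?_
      · have : ⌊u (r - 1)⌋ ≤ ⌊(N:ℝ)⌋ := Int.floor_mono hur1.2
        simp at this
        omega
      · push_cast
        have := Int.floor_le (u (r - 1))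
        linarith
      · push_cast
        have := Int.sub_one_lt_floor (u (r - 1))
        linarith
    calc |(partialSumZ x r ⌊u r⌋ - partialSumZ x r (⌊u (r - 1)⌋ - 1)) -
          (f r (u r) - f r (u (r - 1)))|
        = |(partialSumZ x r ⌊u r⌋ - f r (u r)) -
            (partialSumZ x r (⌊u (r - 1)⌋ - 1) - f r (u (r - 1)))| := by ring_nf
      _ ≤ |partialSumZ x r ⌊u r⌋ - f r (u r)| +
            |partialSumZ x r (⌊u (r - 1)⌋ - 1) - f r (u (r - 1))| := abs_sub _ _
      _ ≤ (e r + ω r) + (e r + ω r) := add_le_add k1 k2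
      _ = 2 * e r + 2 * ω r := by ring
  set D : ℝ := ∑ r ∈ Finset.Icc 1 k, (2 * e r + 2 * ω r) with hD_def
  have hsum : ∀ u : ℕ → ℝ, memU N k u →
      |(∑ r ∈ Finset.Icc 1 k,
          (partialSumZ x r ⌊u r⌋ - partialSumZ x r (⌊u (r - 1)⌋ - 1))) -
        ∑ r ∈ Finset.Icc 1 k, (f r (u r) - f r (u (r - 1)))| ≤ D := by
    intro u hu
    rw [← Finset.sum_sub_distrib]
    calc |∑ r ∈ Finset.Icc 1 k,
          ((partialSumZ x r ⌊u r⌋ - partialSumZ x r (⌊u (r - 1)⌋ - 1)) -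
            (f r (u r) - f r (u (r - 1))))|
        ≤ ∑ r ∈ Finset.Icc 1 k,
          |(partialSumZ x r ⌊u r⌋ - partialSumZ x r (⌊u (r - 1)⌋ - 1)) -
            (f r (u r) - f r (u (r - 1)))| := Finset.abs_sum_le_sum_abs _ _
      _ ≤ D := Finset.sum_le_sum (hterm u hu)
  -- bound for the continuous sums
  have hBval : ∀ u : ℕ → ℝ, memU N k u →
      (∑ r ∈ Finset.Icc 1 k, (f r (u r) - f r (u (r - 1)))) ≤
        ∑ r ∈ Finset.Icc 1 k, 2 * M r := by
    intro u hu
    apply Finset.sum_le_sum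
    intro r hr
    rw [Finset.mem_Icc] at hr
    have h1 := hM r (u r) (hle u hu r hr.2)
    have h2 := hM r (u (r - 1)) (hle u hu (r - 1) (by omega))
    have := le_abs_self (f r (u r))
    have := neg_abs_le (f r (u (r - 1)))
    linarith
  -- nonemptiness
  have hu0 : memU N k (fun i => if i = k then (N:ℝ) else 0) := by
    refine ⟨?_, ?_, ?_, ?_⟩
    · simp only [if_neg (by omega : ¬ (0 = k))]
    · simp
    · intro i hi
      simp only [if_neg (by omega : ¬ (i = k))]
      split_ifs <;> positivity
    · intro i _
      dsimp only
      split_ifs <;> positivity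
  have hAne : A.Nonempty := ⟨_, ⟨_, hu0, rfl⟩⟩
  have hBne : B.Nonempty := ⟨_, ⟨_, hu0, rfl⟩⟩
  -- boundedness
  have hBbdd : BddAbove B := by
    refine ⟨∑ r ∈ Finset.Icc 1 k, 2 * M r, ?_⟩
    rintro v ⟨u, hu, rfl⟩
    exact hBval u hu
  have hAbdd : BddAbove A := by
    refine ⟨(∑ r ∈ Finset.Icc 1 k, 2 * M r) + D, ?_⟩
    rintro v ⟨u, hu, rfl⟩
    have h1 := hsum u hu
    have h2 := hBval u hu
    have h3 := abs_le.mp h1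
    linarith [h3.2]
  -- sSup comparison
  have hAB : sSup A - sSup B ≤ D := by
    rw [sub_le_iff_le_add]
    apply csSup_le hAne
    rintro v ⟨u, hu, rfl⟩
    have h1 := (abs_le.mp (hsum u hu)).2
    have h2 : (∑ r ∈ Finset.Icc 1 k, (f r (u r) - f r (u (r - 1)))) ≤ sSup B :=
      le_csSup hBbdd ⟨u, hu, rfl⟩
    linarith
  have hBA : sSup B - sSup A ≤ D := by
    rw [sub_le_iff_le_add]
    apply csSup_le hBne
    rintro v ⟨u, hu, rfl⟩
    have h1 := (abs_le.mp (hsum u hu)).1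
    have h2 : (∑ r ∈ Finset.Icc 1 k,
        (partialSumZ x r ⌊u r⌋ - partialSumZ x r (⌊u (r - 1)⌋ - 1))) ≤ sSup A :=
      le_csSup hAbdd ⟨u, hu, rfl⟩
    linarith
  have hDeq : D = 2 * (∑ r ∈ Finset.Icc 1 k, e r) + 2 * (∑ r ∈ Finset.Icc 1 k, ω r) := by
    rw [hD_def, Finset.sum_add_distrib, Finset.mul_sum, Finset.mul_sum]
  rw [abs_sub_le_iff]
  constructor
  · calc sSup A - sSup B ≤ D := hAB
      _ = _ := hDeq
  · calc sSup B - sSup A ≤ D := hBA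
      _ = _ := hDeq
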